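/- For all real parameters η > 0 and φ > 0, the fourth raw moment of the PCD is ∑_{x=0}^∞ x⁴·p(x) = (η⁴ + 2(2φ+7)η³ + 4(35φ+9)η² + 24(30φ+1)η + 840φ)/(η⁴(φ+η)). -/

import Mathlib

lemma chsucc (k n : ℕ) : (((n + (k+1)).choose (k+1) : ℝ)) * (k+1) = ((n:ℝ) + k + 1) * ((n + k).choose k) := by
  have h := Nat.add_one_mul_choose_eq (n + k) k
  rw [show n + (k+1) = n + k + 1 by omega]
  have := congrArg (fun m : ℕ => (m : ℝ)) h
  push_cast at this
  linarith [this]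

lemma ch1 (n : ℕ) : ((n + 1).choose 1 : ℝ) = (n:ℝ) + 1 := by
  simp

lemma ch2 (n : ℕ) : ((n + 2).choose 2 : ℝ) = ((n:ℝ)+1)*((n:ℝ)+2)/2 := by
  have h := chsucc 1 n
  norm_num [ch1] at h
  linear_combination h / 2

lemma ch3 (n : ℕ) : ((n + 3).choose 3 : ℝ) = ((n:ℝ)+1)*((n:ℝ)+2)*((n:ℝ)+3)/6 := by
  have h := chsucc 2 n
  norm_num [ch2] at h
  linear_combination h / 3

lemma ch4 (n : ℕ) : ((n + 4).choose 4 : ℝ) = ((n:ℝ)+1)*((n:ℝ)+2)*((n:ℝ)+3)*((n:ℝ)+4)/24 := by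
  have h := chsucc 3 n
  norm_num [ch3] at h
  linear_combination h / 4

lemma ch5 (n : ℕ) : ((n + 5).choose 5 : ℝ) = ((n:ℝ)+1)*((n:ℝ)+2)*((n:ℝ)+3)*((n:ℝ)+4)*((n:ℝ)+5)/120 := by
  have h := chsucc 4 n
  norm_num [ch4] at h
  linear_combination h / 5

lemma ch6 (n : ℕ) : ((n + 6).choose 6 : ℝ) = ((n:ℝ)+1)*((n:ℝ)+2)*((n:ℝ)+3)*((n:ℝ)+4)*((n:ℝ)+5)*((n:ℝ)+6)/720 := by
  have h := chsucc 5 n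
  norm_num [ch5] at h
  linear_combination h / 6

lemma ch7 (n : ℕ) : ((n + 7).choose 7 : ℝ) = ((n:ℝ)+1)*((n:ℝ)+2)*((n:ℝ)+3)*((n:ℝ)+4)*((n:ℝ)+5)*((n:ℝ)+6)*((n:ℝ)+7)/5040 := by
  have h := chsucc 6 n
  norm_num [ch6] at h
  linear_combination h / 7

set_option maxHeartbeats 2000000 in
/-- The fourth raw moment of the PCD. -/
theorem pcd_fourth_moment (η φ : ℝ) (hη : 0 < η) (hφ : 0 < φ) :
    ∑' x : ℕ, (x : ℝ) ^ 4 *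
        ((η ^ 2 / ((φ + η) * (1 + η) ^ (x + 4)))
          * ((1 + η) ^ 3
            + (φ * η ^ 2 / 6) * ((x : ℝ) + 1) * ((x : ℝ) + 2) * ((x : ℝ) + 3)))
      = (η ^ 4 + 2 * (2 * φ + 7) * η ^ 3 + 4 * (35 * φ + 9) * η ^ 2
          + 24 * (30 * φ + 1) * η + 840 * φ) / (η ^ 4 * (φ + η)) := by
  have h1η : (0:ℝ) < 1 + η := by linarith
  have h1η' : (1:ℝ) + η ≠ 0 := ne_of_gt h1η
  have hφη : φ + η ≠ 0 := by positivity
  have hηne : η ≠ 0 := ne_of_gt hη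
  set r : ℝ := (1 + η)⁻¹ with hrdef
  have hr : ‖r‖ < 1 := by
    rw [Real.norm_eq_abs, abs_of_pos (by positivity)]
    rw [inv_lt_one_iff₀]
    right; linarith
  have hS : ∀ k : ℕ, HasSum (fun x : ℕ => (((x + k).choose k : ℕ) : ℝ) * r ^ x)
      (1 / (1 - r) ^ (k + 1)) :=
    fun k => hasSum_choose_mul_geometric_of_norm_lt_one k hr
  set D : ℝ := η ^ 2 / ((φ + η) * (1 + η) ^ 4) with hDdef
  set d0 : ℝ := D * (1 + η) ^ 3 with hd0
  set d1 : ℝ := -15 * D * (1 + η) ^ 3 with hd1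
  set d2 : ℝ := 50 * D * (1 + η) ^ 3 with hd2
  set d3 : ℝ := D * (-60 * (1 + η) ^ 3 + 256 * φ * η ^ 2) with hd3
  set d4 : ℝ := D * (24 * (1 + η) ^ 3 - 1476 * φ * η ^ 2) with hd4
  set d5 : ℝ := D * (3020 * φ * η ^ 2) with hd5
  set d6 : ℝ := D * (-2640 * φ * η ^ 2) with hd6
  set d7 : ℝ := D * (840 * φ * η ^ 2) with hd7
  have H : HasSum (fun x : ℕ =>
      d0 * ((((x + 0).choose 0 : ℕ) : ℝ) * r ^ x)
      + d1 * ((((x + 1).choose 1 : ℕ) : ℝ) * r ^ x)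
      + d2 * ((((x + 2).choose 2 : ℕ) : ℝ) * r ^ x)
      + d3 * ((((x + 3).choose 3 : ℕ) : ℝ) * r ^ x)
      + d4 * ((((x + 4).choose 4 : ℕ) : ℝ) * r ^ x)
      + d5 * ((((x + 5).choose 5 : ℕ) : ℝ) * r ^ x)
      + d6 * ((((x + 6).choose 6 : ℕ) : ℝ) * r ^ x)
      + d7 * ((((x + 7).choose 7 : ℕ) : ℝ) * r ^ x))
      (d0 * (1 / (1 - r) ^ (0 + 1))
      + d1 * (1 / (1 - r) ^ (1 + 1))
      + d2 * (1 / (1 - r) ^ (2 + 1))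
      + d3 * (1 / (1 - r) ^ (3 + 1))
      + d4 * (1 / (1 - r) ^ (4 + 1))
      + d5 * (1 / (1 - r) ^ (5 + 1))
      + d6 * (1 / (1 - r) ^ (6 + 1))
      + d7 * (1 / (1 - r) ^ (7 + 1))) := by
    exact (((((((((hS 0).mul_left d0).add ((hS 1).mul_left d1)).add
      ((hS 2).mul_left d2)).add ((hS 3).mul_left d3)).add
      ((hS 4).mul_left d4)).add ((hS 5).mul_left d5)).add
      ((hS 6).mul_left d6)).add ((hS 7).mul_left d7))
  have hpt : ∀ x : ℕ, (x : ℝ) ^ 4 *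
        ((η ^ 2 / ((φ + η) * (1 + η) ^ (x + 4)))
          * ((1 + η) ^ 3
            + (φ * η ^ 2 / 6) * ((x : ℝ) + 1) * ((x : ℝ) + 2) * ((x : ℝ) + 3)))
      = d0 * ((((x + 0).choose 0 : ℕ) : ℝ) * r ^ x)
      + d1 * ((((x + 1).choose 1 : ℕ) : ℝ) * r ^ x)
      + d2 * ((((x + 2).choose 2 : ℕ) : ℝ) * r ^ x)
      + d3 * ((((x + 3).choose 3 : ℕ) : ℝ) * r ^ x)
      + d4 * ((((x + 4).choose 4 : ℕ) : ℝ) * r ^ x)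
      + d5 * ((((x + 5).choose 5 : ℕ) : ℝ) * r ^ x)
      + d6 * ((((x + 6).choose 6 : ℕ) : ℝ) * r ^ x)
      + d7 * ((((x + 7).choose 7 : ℕ) : ℝ) * r ^ x) := by
    intro x
    have hx0 : (((x + 0).choose 0 : ℕ) : ℝ) = 1 := by simp
    have hxne : (1 + η) ^ x ≠ 0 := pow_ne_zero _ h1η'
    have hfac : η ^ 2 / ((φ + η) * (1 + η) ^ (x + 4)) = D * r ^ x := by
      rw [hDdef, hrdef, inv_pow, pow_add]
      field_simp
    rw [hx0, ch1, ch2, ch3, ch4, ch5, ch6, ch7, hd0, hd1, hd2, hd3, hd4, hd5,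
      hd6, hd7, hfac]
    ring
  rw [tsum_congr hpt, H.tsum_eq]
  have h1r : (1:ℝ) - r = η / (1 + η) := by
    rw [hrdef]; field_simp; ring
  have hinv : ∀ k : ℕ, 1 / (η / (1 + η)) ^ k = (1 + η) ^ k / η ^ k := by
    intro k
    rw [div_pow, one_div, inv_div]
  rw [h1r]
  simp only [hinv]
  rw [hd0, hd1, hd2, hd3, hd4, hd5, hd6, hd7, hDdef]
  field_simp
  ring
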